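/- Two distinct Baer sublines of PG(2,q²) having a common point and not contained in a common line are contained in a unique Baer subplane. -/

import Mathlib

open Submodule Module

set_option linter.unusedSectionVars false
set_option synthInstance.maxHeartbeats 1000000
set_option maxHeartbeats 2000000

/-- A Baer subline of `PG(2,q²)`: the image, under a projectivity of the plane, of the
standard `GF(q)`-rational points of the line `z = 0`. -/
def IsBaerSubline (F : Type*) {K : Type*} [Field F] [Field K] [Algebra F K]
    (B : Set (Projectivization K (Fin 3 → K))) : Prop :=
  ∃ g : (Fin 3 → K) ≃ₗ[K] (Fin 3 → K),
    B = {p | ∃ v : Fin 2 → F, v ≠ 0 ∧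
      p.submodule =
        Submodule.span K {g ![algebraMap F K (v 0), algebraMap F K (v 1), 0]}}

/-- A Baer subplane of `PG(2,q²)`: the image, under a projectivity of the plane, of the
standard `GF(q)`-rational points of the plane. -/
def IsBaerSubplane (F : Type*) {K : Type*} [Field F] [Field K] [Algebra F K]
    (B : Set (Projectivization K (Fin 3 → K))) : Prop :=
  ∃ g : (Fin 3 → K) ≃ₗ[K] (Fin 3 → K),
    B = {p | ∃ v : Fin 3 → F, v ≠ 0 ∧
      p.submodule = Submodule.span K {g (fun i => algebraMap F K (v i))}}

section Aux

variable {F K : Type*} [Field F] [Field K] [Algebra F K] [Fintype K]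

lemma stmt17_range_pair {α : Type*} (a b : α) : Set.range ![a, b] = {a, b} := by
  ext z
  constructor
  · rintro ⟨i, rfl⟩
    fin_cases i
    · exact Set.mem_insert _ _
    · exact Set.mem_insert_of_mem _ rfl
  · rintro (rfl | rfl)
    · exact ⟨0, rfl⟩
    · exact ⟨1, rfl⟩

lemma stmt17_finrank_span_pair_le (x y : Fin 3 → K) :
    finrank K (span K ({x, y} : Set (Fin 3 → K))) ≤ 2 := by
  classical
  refine (finrank_span_le_card _).trans ?_
  rw [Set.toFinset_insert, Set.toFinset_singleton]
  simpa using Finset.card_insert_le x {y}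

lemma stmt17_not_le_restrict (V'' : Submodule F (Fin 3 → K))
    (htop : span K (V'' : Set (Fin 3 → K)) = ⊤)
    {W : Submodule K (Fin 3 → K)} (hW : finrank K W ≤ 2) :
    ¬ (V'' ≤ W.restrictScalars F) := by
  intro h
  have h1 : span K (V'' : Set (Fin 3 → K)) ≤ W := span_le.2 h
  rw [htop, top_le_iff] at h1
  rw [h1, finrank_top, Module.finrank_fin_fun] at hW
  omega

lemma stmt17_lemU (V'' : Submodule F (Fin 3 → K)) (h3 : finrank F V'' = 3)
    (htop : span K (V'' : Set (Fin 3 → K)) = ⊤)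
    {W : Submodule K (Fin 3 → K)} (hW : finrank K W ≤ 2) :
    finrank F (V'' ⊓ W.restrictScalars F : Submodule F (Fin 3 → K)) ≤ 2 := by
  have hlt : V'' ⊓ W.restrictScalars F < V'' := by
    refine lt_of_le_of_ne inf_le_left (fun he => stmt17_not_le_restrict V'' htop hW ?_)
    conv_lhs => rw [← he]
    exact inf_le_right
  have := Submodule.finrank_lt_finrank_of_lt hlt
  omega

lemma stmt17_lemC (V'' : Submodule F (Fin 3 → K)) (h3 : finrank F V'' = 3)
    (htop : span K (V'' : Set (Fin 3 → K)) = ⊤)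
    {x₁ x₂ : Fin 3 → K} (hx : LinearIndependent K ![x₁, x₂])
    {l₁ l₂ l₃ : K} (h₁ : l₁ ≠ 0) (h₂ : l₂ ≠ 0) (h₃ : l₃ ≠ 0)
    (m₁ : l₁ • x₁ ∈ V'') (m₂ : l₂ • x₂ ∈ V'') (m₃ : l₃ • (x₁ + x₂) ∈ V'') :
    ∃ μ : K, μ ≠ 0 ∧ μ • x₁ ∈ V'' ∧ μ • x₂ ∈ V'' := by
  classical
  set W : Submodule K (Fin 3 → K) := span K ({x₁, x₂} : Set (Fin 3 → K)) with hWdef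
  set U : Submodule F (Fin 3 → K) := V'' ⊓ W.restrictScalars F with hUdef
  have hUle : finrank F U ≤ 2 := stmt17_lemU V'' h3 htop (stmt17_finrank_span_pair_le x₁ x₂)
  have hx₁W : x₁ ∈ W := subset_span (by simp)
  have hx₂W : x₂ ∈ W := subset_span (by simp)
  have hy₁U : l₁ • x₁ ∈ U := ⟨m₁, W.smul_mem _ hx₁W⟩
  have hy₂U : l₂ • x₂ ∈ U := ⟨m₂, W.smul_mem _ hx₂W⟩
  have hy₃U : l₃ • (x₁ + x₂) ∈ U := ⟨m₃, W.smul_mem _ (W.add_mem hx₁W hx₂W)⟩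
  have hxp := LinearIndependent.pair_iff.mp hx
  have hK2 : LinearIndependent K ![l₁ • x₁, l₂ • x₂] := by
    rw [LinearIndependent.pair_iff]
    intro s t hst
    have h := hxp (s * l₁) (t * l₂) (by rw [mul_smul, mul_smul]; exact hst)
    exact ⟨(mul_eq_zero.mp h.1).resolve_right h₁, (mul_eq_zero.mp h.2).resolve_right h₂⟩
  have hF2 : LinearIndependent F ![l₁ • x₁, l₂ • x₂] :=
    LinearIndependent.restrict_scalars (by simpa only [Algebra.smul_def, mul_one] using (algebraMap F K).injective) hK2
  have hspan : span F (Set.range ![l₁ • x₁, l₂ • x₂]) = U := by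
    apply Submodule.eq_of_le_of_finrank_le
    · rw [span_le]
      rintro z hz
      simp only [Set.mem_range] at hz
      obtain ⟨i, rfl⟩ := hz
      fin_cases i
      · exact hy₁U
      · exact hy₂U
    · rw [finrank_span_eq_card hF2]
      simpa using hUle
  have hy₃span : l₃ • (x₁ + x₂) ∈ span F ({l₁ • x₁, l₂ • x₂} : Set (Fin 3 → K)) := by
    rw [← stmt17_range_pair (l₁ • x₁) (l₂ • x₂), hspan]
    exact hy₃U
  obtain ⟨a, b, hab⟩ := Submodule.mem_span_pair.mp hy₃span
  have key : (algebraMap F K a * l₁ - l₃) • x₁ + (algebraMap F K b * l₂ - l₃) • x₂ = 0 := by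
    have hab' : (algebraMap F K a * l₁) • x₁ + (algebraMap F K b * l₂) • x₂
        = l₃ • x₁ + l₃ • x₂ := by
      rw [mul_smul, mul_smul, algebraMap_smul, algebraMap_smul, ← smul_add]
      exact hab
    rw [sub_smul, sub_smul]
    rw [show (algebraMap F K a * l₁) • x₁ - l₃ • x₁ + ((algebraMap F K b * l₂) • x₂ - l₃ • x₂)
      = ((algebraMap F K a * l₁) • x₁ + (algebraMap F K b * l₂) • x₂) - (l₃ • x₁ + l₃ • x₂) by
        abel]
    rw [hab']
    simp
  obtain ⟨ha, hb⟩ := hxp _ _ key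
  rw [sub_eq_zero] at ha hb
  have hane : a ≠ 0 := by rintro rfl; simp at ha; exact h₃ ha.symm
  have hbne : b ≠ 0 := by rintro rfl; simp at hb; exact h₃ hb.symm
  refine ⟨l₁, h₁, m₁, ?_⟩
  have heq : l₁ • x₂ = (b / a) • (l₂ • x₂) := by
    rw [← algebraMap_smul K (b / a) (l₂ • x₂), smul_smul, map_div₀]
    congr 1
    have hA : algebraMap F K a ≠ 0 := by simpa using hane
    rw [div_mul_eq_mul_div, hb, ← ha, mul_div_cancel_left₀ _ hA]
  rw [heq]
  exact V''.smul_mem _ m₂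

lemma stmt17_lemD (V'' : Submodule F (Fin 3 → K)) (h3 : finrank F V'' = 3)
    (htop : span K (V'' : Set (Fin 3 → K)) = ⊤)
    {x : Fin 3 → K} (hx : x ≠ 0)
    {μ₁ μ₂ : K} (h₁ : μ₁ ≠ 0) (h₂ : μ₂ ≠ 0)
    (m₁ : μ₁ • x ∈ V'') (m₂ : μ₂ • x ∈ V'') :
    ∃ c : F, c ≠ 0 ∧ μ₂ = algebraMap F K c * μ₁ := by
  classical
  by_contra hcon
  push_neg at hcon
  have hind : LinearIndependent F ![μ₁ • x, μ₂ • x] := by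
    rw [LinearIndependent.pair_iff]
    intro s t hst
    have hsum : (algebraMap F K s * μ₁ + algebraMap F K t * μ₂) • x = 0 := by
      rw [add_smul, mul_smul, mul_smul, algebraMap_smul, algebraMap_smul]; exact hst
    have hz : algebraMap F K s * μ₁ + algebraMap F K t * μ₂ = 0 :=
      (smul_eq_zero.mp hsum).resolve_right hx
    by_cases ht : t = 0
    · subst ht
      simp only [map_zero, zero_mul, add_zero] at hz
      rcases mul_eq_zero.mp hz with h | h
      · exact ⟨by simpa using h, rfl⟩
      · exact absurd h h₁
    · exfalso
      have ht' : algebraMap F K t ≠ 0 := by simpa using ht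
      have hμ₂ : μ₂ = algebraMap F K (-s / t) * μ₁ := by
        rw [map_div₀, map_neg]
        field_simp
        linear_combination hz
      by_cases hst0 : -s / t = 0
      · rw [hst0] at hμ₂; simp at hμ₂; exact h₂ hμ₂
      · exact hcon _ hst0 hμ₂
  have hxr : ¬ (V'' ≤ (span K ({x} : Set (Fin 3 → K))).restrictScalars F) :=
    stmt17_not_le_restrict V'' htop (by rw [finrank_span_singleton hx]; omega)
  obtain ⟨y, hyV, hyx⟩ := SetLike.not_le_iff_exists.mp hxr
  have hymem : y ∉ span K ({x} : Set (Fin 3 → K)) := hyx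
  have hrange : Set.range ![μ₁ • x, μ₂ • x] ⊆
      ((span K ({x} : Set (Fin 3 → K))).restrictScalars F : Set (Fin 3 → K)) := by
    rintro z ⟨i, rfl⟩
    fin_cases i <;>
      exact Submodule.smul_mem _ _ (subset_span (by simp))
  have hynotin : y ∉ span F (Set.range ![μ₁ • x, μ₂ • x]) := by
    intro hy
    exact hymem (span_le.mpr hrange hy)
  have htri : LinearIndependent F (Fin.cons y ![μ₁ • x, μ₂ • x]) :=
    linearIndependent_fin_cons.mpr ⟨hind, hynotin⟩
  have hspan3 : span F (Set.range (Fin.cons y ![μ₁ • x, μ₂ • x])) = V'' := by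
    apply Submodule.eq_of_le_of_finrank_le
    · rw [span_le]
      rintro z ⟨i, rfl⟩
      fin_cases i
      · exact hyV
      · exact m₁
      · exact m₂
    · rw [finrank_span_eq_card htri]
      simp [h3]
  have hle : V'' ≤ (span K ({x, y} : Set (Fin 3 → K))).restrictScalars F := by
    rw [← hspan3, span_le]
    rintro z ⟨i, rfl⟩
    fin_cases i
    · exact subset_span (by simp)
    · exact Submodule.smul_mem _ _ (subset_span (by simp))
    · exact Submodule.smul_mem _ _ (subset_span (by simp))
  exact stmt17_not_le_restrict V'' htop (stmt17_finrank_span_pair_le x y) hle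

lemma stmt17_subplane_form {B : Set (Projectivization K (Fin 3 → K))}
    (h : IsBaerSubplane F B) :
    ∃ V : Submodule F (Fin 3 → K), finrank F V = 3 ∧ span K (V : Set (Fin 3 → K)) = ⊤ ∧
      B = {p | ∃ w ∈ V, w ≠ 0 ∧ p.submodule = span K {w}} := by
  obtain ⟨g, hB⟩ := h
  let iota3 : (Fin 3 → F) →ₗ[F] (Fin 3 → K) :=
    { toFun := fun v => fun i => algebraMap F K (v i)
      map_add' := fun v w => by funext i; simp
      map_smul' := fun c v => by funext i; simp [Algebra.smul_def] }
  have iota3_inj : Function.Injective iota3 := by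
    intro v w h
    funext i
    exact (algebraMap F K).injective (congrFun h i)
  refine ⟨Submodule.map ((g.restrictScalars F).toLinearMap) (LinearMap.range iota3),
    ?_, ?_, ?_⟩
  · rw [LinearEquiv.finrank_map_eq (g.restrictScalars F)]
    rw [LinearMap.finrank_range_of_inj iota3_inj, Module.finrank_fin_fun]
  · rw [Submodule.map_coe]
    have hco : ((g.restrictScalars F).toLinearMap : (Fin 3 → K) → (Fin 3 → K)) = g := rfl
    rw [hco, Submodule.span_image_linearEquiv]
    have htop : span K ((LinearMap.range iota3) : Set (Fin 3 → K)) = ⊤ := by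
      rw [eq_top_iff, ← (Pi.basisFun K (Fin 3)).span_eq, span_le]
      rintro z ⟨i, rfl⟩
      apply subset_span
      refine ⟨Pi.single i 1, ?_⟩
      show iota3 (Pi.single i 1) = _
      funext j
      simp [iota3, Pi.single_apply, apply_ite (algebraMap F K)]
    rw [htop, Submodule.map_top]
    exact LinearEquiv.range g
  · rw [hB]
    ext p
    constructor
    · rintro ⟨v, hv, hp⟩
      refine ⟨g (iota3 v), ⟨iota3 v, ⟨v, rfl⟩, rfl⟩, ?_, hp⟩
      intro h0
      apply hv
      have h0' : g (iota3 v) = g 0 := by rw [h0]; simp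
      have h1 : iota3 v = 0 := g.injective h0'
      have h2 : iota3 v = iota3 0 := by rw [h1]; simp
      exact iota3_inj h2
    · rintro ⟨w, ⟨u, ⟨v, rfl⟩, rfl⟩, hne, hp⟩
      refine ⟨v, ?_, hp⟩
      rintro rfl
      apply hne
      simp [show iota3 0 = 0 from map_zero _]

lemma stmt17_form_subplane (V : Submodule F (Fin 3 → K)) (h3 : finrank F V = 3)
    (htop : span K (V : Set (Fin 3 → K)) = ⊤) :
    IsBaerSubplane F {p | ∃ w ∈ V, w ≠ 0 ∧ p.submodule = span K {w}} := by
  classical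
  have b : Basis (Fin 3) F V := finBasisOfFinrankEq F V h3
  set c : Fin 3 → (Fin 3 → K) := fun i => (b i : Fin 3 → K) with hc
  have hcspan : ⊤ ≤ span K (Set.range c) := by
    rw [← htop]
    apply span_le.2
    intro w hw
    have hrepr : w = ∑ i, (b.repr ⟨w, hw⟩ i) • c i := by
      calc w = ((⟨w, hw⟩ : V) : Fin 3 → K) := rfl
        _ = ((∑ i, (b.repr ⟨w, hw⟩ i) • b i : V) : Fin 3 → K) := by rw [b.sum_repr]
        _ = ∑ i, (b.repr ⟨w, hw⟩ i) • c i := by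
            rw [Submodule.coe_sum]
            simp only [SetLike.val_smul]
            rfl
    rw [hrepr]
    exact sum_mem fun i _ => by
      rw [← algebraMap_smul K]
      exact smul_mem _ _ (subset_span ⟨i, rfl⟩)
  have card_eq : Fintype.card (Fin 3) = finrank K (Fin 3 → K) := by
    simp [Module.finrank_fin_fun]
  let bK : Basis (Fin 3) K (Fin 3 → K) :=
    basisOfTopLeSpanOfCardEqFinrank c hcspan card_eq
  have hbK : ∀ i, bK i = c i := fun i =>
    congrFun (coe_basisOfTopLeSpanOfCardEqFinrank c hcspan card_eq) i
  set g : (Fin 3 → K) ≃ₗ[K] (Fin 3 → K) := (Pi.basisFun K (Fin 3)).equiv bK (Equiv.refl _)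
    with hgdef
  have hg : ∀ v : Fin 3 → F,
      g (fun i => algebraMap F K (v i)) = ((b.equivFun.symm v : V) : Fin 3 → K) := by
    intro v
    have h1 : (fun i => algebraMap F K (v i))
        = ∑ i, algebraMap F K (v i) • (Pi.basisFun K (Fin 3)) i := by
      funext j
      simp [Pi.basisFun_apply, Finset.sum_apply, Pi.single_apply, Algebra.smul_def]
    rw [h1, map_sum]
    have h2 : ∀ i, g ((Pi.basisFun K (Fin 3)) i) = c i := by
      intro i
      rw [hgdef, Basis.equiv_apply, Equiv.refl_apply, hbK]
    simp_rw [map_smul, h2]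
    rw [Basis.equivFun_symm_apply, Submodule.coe_sum]
    congr 1
    funext i
    rw [SetLike.val_smul, algebraMap_smul]
  refine ⟨g, ?_⟩
  ext p
  simp only [Set.mem_setOf_eq]
  constructor
  · rintro ⟨w, hwV, hw0, hp⟩
    refine ⟨b.equivFun ⟨w, hwV⟩, ?_, ?_⟩
    · intro h0
      apply hw0
      have h1 : (⟨w, hwV⟩ : V) = b.equivFun.symm 0 := by
        rw [← h0, LinearEquiv.symm_apply_apply]
      have h2 : (⟨w, hwV⟩ : V) = 0 := by simpa using h1
      exact congrArg Subtype.val h2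
    · rw [hg, LinearEquiv.symm_apply_apply]
      exact hp
  · rintro ⟨v, hv, hp⟩
    refine ⟨g (fun i => algebraMap F K (v i)), ?_, ?_, hp⟩
    · rw [hg]
      exact (b.equivFun.symm v : V).2
    · rw [hg]
      intro h0
      apply hv
      have hsymm : b.equivFun.symm v = 0 := by
        exact Subtype.val_injective h0
      have h4 : v = b.equivFun 0 := by rw [← hsymm, LinearEquiv.apply_symm_apply]
      rw [map_zero] at h4
      exact h4

lemma stmt17_subline_form {B : Set (Projectivization K (Fin 3 → K))}
    (h : IsBaerSubline F B) :
    ∃ x₁ x₂ : Fin 3 → K, LinearIndependent K ![x₁, x₂] ∧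
      B = {p | ∃ v : Fin 2 → F, v ≠ 0 ∧
        p.submodule = span K {algebraMap F K (v 0) • x₁ + algebraMap F K (v 1) • x₂}} := by
  obtain ⟨g, hB⟩ := h
  have key : ∀ v : Fin 2 → F,
      (![algebraMap F K (v 0), algebraMap F K (v 1), 0] : Fin 3 → K)
        = algebraMap F K (v 0) • ![1,0,0] + algebraMap F K (v 1) • ![0,1,0] := by
    intro v
    funext i
    fin_cases i <;> simp [Algebra.smul_def]
  have h0 : LinearIndependent K ![(![1,0,0] : Fin 3 → K), ![0,1,0]] := by
    rw [LinearIndependent.pair_iff]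
    intro s t hst
    constructor
    · simpa using congrFun hst 0
    · simpa using congrFun hst 1
  have hcomp : (⇑g ∘ ![(![1,0,0] : Fin 3 → K), ![0,1,0]]) = ![g ![1,0,0], g ![0,1,0]] := by
    funext i
    fin_cases i <;> rfl
  refine ⟨g ![1,0,0], g ![0,1,0], ?_, ?_⟩
  · rw [← hcomp]
    exact h0.map' g.toLinearMap (LinearEquiv.ker g)
  · rw [hB]
    ext p
    simp only [Set.mem_setOf_eq]
    constructor
    · rintro ⟨v, hv, hp⟩
      exact ⟨v, hv, by rw [hp, key v, map_add, map_smul, map_smul]⟩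
    · rintro ⟨v, hv, hp⟩
      exact ⟨v, hv, by rw [hp, key v, map_add, map_smul, map_smul]⟩

end Aux

/-- Two distinct Baer sublines of `PG(2,q²)` having a common point and not contained
in a common line are contained in a unique Baer subplane. -/
theorem stmt17 {F K : Type*} [Field F] [Field K] [Algebra F K]
    [Fintype F] [Fintype K] (q : ℕ)
    (hF : Fintype.card F = q) (hK : Fintype.card K = q ^ 2)
    (B₁ B₂ : Set (Projectivization K (Fin 3 → K)))
    (h₁ : IsBaerSubline F B₁) (h₂ : IsBaerSubline F B₂) (hne : B₁ ≠ B₂)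
    (hcommon : ∃ P, P ∈ B₁ ∩ B₂)
    (hnoline : ¬ ∃ W : Submodule K (Fin 3 → K), Module.finrank K W = 2 ∧
      ∀ p, p ∈ B₁ ∪ B₂ → p.submodule ≤ W) :
    ∃! B : Set (Projectivization K (Fin 3 → K)),
      IsBaerSubplane F B ∧ B₁ ∪ B₂ ⊆ B := by
  classical
  obtain ⟨x₁, x₂, hxi, hB₁⟩ := stmt17_subline_form h₁
  obtain ⟨y₁, y₂, hyi, hB₂⟩ := stmt17_subline_form h₂
  set wx : (Fin 2 → F) → (Fin 3 → K) :=
    fun v => algebraMap F K (v 0) • x₁ + algebraMap F K (v 1) • x₂ with hwx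
  set wy : (Fin 2 → F) → (Fin 3 → K) :=
    fun v => algebraMap F K (v 0) • y₁ + algebraMap F K (v 1) • y₂ with hwy
  have hv_ne : ∀ {v : Fin 2 → F}, v ≠ 0 → ¬ (v 0 = 0 ∧ v 1 = 0) := by
    rintro v hv ⟨h0, h1⟩
    apply hv
    funext i
    fin_cases i
    · exact h0
    · exact h1
  have hwx_ne : ∀ {v : Fin 2 → F}, v ≠ 0 → wx v ≠ 0 := by
    intro v hv h0
    obtain ⟨ha, hb⟩ := LinearIndependent.pair_iff.mp hxi _ _ h0
    exact hv_ne hv ⟨by simpa using ha, by simpa using hb⟩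
  have hwy_ne : ∀ {v : Fin 2 → F}, v ≠ 0 → wy v ≠ 0 := by
    intro v hv h0
    obtain ⟨ha, hb⟩ := LinearIndependent.pair_iff.mp hyi _ _ h0
    exact hv_ne hv ⟨by simpa using ha, by simpa using hb⟩
  -- the K-lines spanned by the two sublines
  set W₁ : Submodule K (Fin 3 → K) := span K ({x₁, x₂} : Set (Fin 3 → K)) with hW₁def
  set W₂ : Submodule K (Fin 3 → K) := span K ({y₁, y₂} : Set (Fin 3 → K)) with hW₂def
  have hx₁W₁ : x₁ ∈ W₁ := subset_span (by simp)
  have hx₂W₁ : x₂ ∈ W₁ := subset_span (by simp)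
  have hy₁W₂ : y₁ ∈ W₂ := subset_span (by simp)
  have hy₂W₂ : y₂ ∈ W₂ := subset_span (by simp)
  have hwxW₁ : ∀ v, wx v ∈ W₁ := fun v =>
    W₁.add_mem (W₁.smul_mem _ hx₁W₁) (W₁.smul_mem _ hx₂W₁)
  have hwyW₂ : ∀ v, wy v ∈ W₂ := fun v =>
    W₂.add_mem (W₂.smul_mem _ hy₁W₂) (W₂.smul_mem _ hy₂W₂)
  have hW₁rank : finrank K W₁ = 2 := by
    rw [hW₁def, ← stmt17_range_pair x₁ x₂, finrank_span_eq_card hxi]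
    simp
  have hW₂rank : finrank K W₂ = 2 := by
    rw [hW₂def, ← stmt17_range_pair y₁ y₂, finrank_span_eq_card hyi]
    simp
  -- the common point
  obtain ⟨P, hP₁, hP₂⟩ := hcommon
  rw [hB₁] at hP₁
  rw [hB₂] at hP₂
  obtain ⟨a, ha, hPa⟩ := hP₁
  obtain ⟨bb, hbb, hPb⟩ := hP₂
  have hx0 : wx a ≠ 0 := hwx_ne ha
  have hy0 : wy bb ≠ 0 := hwy_ne hbb
  have hspan_xy : span K {wx a} = span K ({wy bb} : Set (Fin 3 → K)) := by
    rw [← hPa, ← hPb]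
  obtain ⟨κ, hκ⟩ : ∃ κ : K, κ • wx a = wy bb := by
    have : wy bb ∈ span K ({wx a} : Set (Fin 3 → K)) := by
      rw [hspan_xy]
      exact mem_span_singleton_self _
    exact mem_span_singleton.mp this
  have hκ0 : κ ≠ 0 := by
    rintro rfl
    apply hy0
    rw [← hκ, zero_smul]
  -- the two lines are distinct
  have hW12 : W₁ ≠ W₂ := by
    intro he
    apply hnoline
    refine ⟨W₁, hW₁rank, ?_⟩
    rintro p (hp | hp)
    · rw [hB₁] at hp
      obtain ⟨v, hv, hpv⟩ := hp
      rw [hpv]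
      exact (span_singleton_le_iff_mem _ _).mpr (hwxW₁ v)
    · rw [hB₂] at hp
      obtain ⟨v, hv, hpv⟩ := hp
      rw [hpv, he]
      exact (span_singleton_le_iff_mem _ _).mpr (hwyW₂ v)
  have hWsup : W₁ ⊔ W₂ = ⊤ := by
    have hlt : W₁ < W₁ ⊔ W₂ := by
      refine lt_of_le_of_ne le_sup_left (fun he => hW12 ?_)
      have hle : W₂ ≤ W₁ := by rw [he]; exact le_sup_right
      exact (Submodule.eq_of_le_of_finrank_le hle (by omega)).symm
    have h3 := Submodule.finrank_lt_finrank_of_lt hlt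
    have h4 : finrank K (W₁ ⊔ W₂ : Submodule K (Fin 3 → K)) ≤ 3 := by
      have := Submodule.finrank_le (W₁ ⊔ W₂ : Submodule K (Fin 3 → K))
      rwa [Module.finrank_fin_fun] at this
    exact Submodule.eq_top_of_finrank_eq (by rw [Module.finrank_fin_fun]; omega)
  have hxW₂ : wx a ∈ W₂ := by
    have h1 : wy bb ∈ W₂ := hwyW₂ bb
    have h2 : κ⁻¹ • wy bb ∈ W₂ := W₂.smul_mem _ h1
    rwa [← hκ, smul_smul, inv_mul_cancel₀ hκ0, one_smul] at h2
  have hWinf : W₁ ⊓ W₂ = span K {wx a} := by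
    symm
    apply Submodule.eq_of_le_of_finrank_le
    · exact (span_singleton_le_iff_mem _ _).mpr ⟨hwxW₁ a, hxW₂⟩
    · have h5 := Submodule.finrank_sup_add_finrank_inf_eq W₁ W₂
      rw [hWsup, finrank_top, Module.finrank_fin_fun, hW₁rank, hW₂rank] at h5
      rw [finrank_span_singleton hx0]
      omega
  -- the F-forms
  set V₁ : Submodule F (Fin 3 → K) := span F ({x₁, x₂} : Set (Fin 3 → K)) with hV₁def
  set V₂' : Submodule F (Fin 3 → K) :=
    span F ({κ⁻¹ • y₁, κ⁻¹ • y₂} : Set (Fin 3 → K)) with hV₂'def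
  have hwxV₁ : ∀ v, wx v ∈ V₁ := by
    intro v
    refine mem_span_pair.mpr ⟨v 0, v 1, ?_⟩
    rw [← algebraMap_smul K (v 0) x₁, ← algebraMap_smul K (v 1) x₂]
  have hwyV₂' : ∀ v, κ⁻¹ • wy v ∈ V₂' := by
    intro v
    refine mem_span_pair.mpr ⟨v 0, v 1, ?_⟩
    rw [← algebraMap_smul K (v 0) (κ⁻¹ • y₁), ← algebraMap_smul K (v 1) (κ⁻¹ • y₂),
      hwy, smul_add, smul_smul, smul_smul, smul_smul, smul_smul,
      mul_comm (algebraMap F K (v 0)) κ⁻¹, mul_comm (algebraMap F K (v 1)) κ⁻¹]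
  have hV₁W₁ : V₁ ≤ W₁.restrictScalars F := by
    rw [hV₁def, span_le]
    rintro z (rfl | rfl)
    · exact hx₁W₁
    · exact hx₂W₁
  have hV₂'W₂ : V₂' ≤ W₂.restrictScalars F := by
    rw [hV₂'def, span_le]
    rintro z (rfl | rfl)
    · exact W₂.smul_mem _ hy₁W₂
    · exact W₂.smul_mem _ hy₂W₂
  have hxV₁ : wx a ∈ V₁ := hwxV₁ a
  have hxV₂' : wx a ∈ V₂' := by
    have := hwyV₂' bb
    rwa [← hκ, smul_smul, inv_mul_cancel₀ hκ0, one_smul] at this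
  have hxiF : LinearIndependent F ![x₁, x₂] :=
    LinearIndependent.restrict_scalars (by simpa only [Algebra.smul_def, mul_one] using (algebraMap F K).injective) hxi
  have hyiK' : LinearIndependent K ![κ⁻¹ • y₁, κ⁻¹ • y₂] := by
    rw [LinearIndependent.pair_iff]
    intro s t hst
    have h := LinearIndependent.pair_iff.mp hyi (s * κ⁻¹) (t * κ⁻¹)
      (by rw [mul_smul, mul_smul]; exact hst)
    constructor
    · exact (mul_eq_zero.mp h.1).resolve_right (inv_ne_zero hκ0)
    · exact (mul_eq_zero.mp h.2).resolve_right (inv_ne_zero hκ0)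
  have hyiF' : LinearIndependent F ![κ⁻¹ • y₁, κ⁻¹ • y₂] :=
    LinearIndependent.restrict_scalars (by simpa only [Algebra.smul_def, mul_one] using (algebraMap F K).injective) hyiK'
  have hV₁rank : finrank F V₁ = 2 := by
    rw [hV₁def, ← stmt17_range_pair x₁ x₂, finrank_span_eq_card hxiF]
    simp
  have hV₂'rank : finrank F V₂' = 2 := by
    rw [hV₂'def, ← stmt17_range_pair (κ⁻¹ • y₁) (κ⁻¹ • y₂), finrank_span_eq_card hyiF']
    simp
  -- span of V₁ over K is W₁ etc.
  have hspanV₁ : span K (V₁ : Set (Fin 3 → K)) = W₁ := by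
    apply le_antisymm
    · rw [span_le]
      exact fun z hz => hV₁W₁ hz
    · rw [hW₁def, span_le]
      exact fun z hz => subset_span (subset_span hz)
  -- V₁ ⊓ V₂' = span F {wx a}
  have hVinf : V₁ ⊓ V₂' = span F {wx a} := by
    have hnotle : ¬ (V₁ ≤ (span K ({wx a} : Set (Fin 3 → K))).restrictScalars F) := by
      intro hle
      have h1 : span K (V₁ : Set (Fin 3 → K)) ≤ span K ({wx a} : Set (Fin 3 → K)) :=
        span_le.2 hle
      rw [hspanV₁] at h1
      have h2 := Submodule.finrank_mono h1
      rw [hW₁rank, finrank_span_singleton hx0] at h2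
      omega
    have hUlt : V₁ ⊓ (span K ({wx a} : Set (Fin 3 → K))).restrictScalars F < V₁ := by
      refine lt_of_le_of_ne inf_le_left (fun he => hnotle ?_)
      conv_lhs => rw [← he]
      exact inf_le_right
    have hUrank := Submodule.finrank_lt_finrank_of_lt hUlt
    rw [hV₁rank] at hUrank
    have hsle : span F ({wx a} : Set (Fin 3 → K)) ≤
        V₁ ⊓ (span K ({wx a} : Set (Fin 3 → K))).restrictScalars F := by
      rw [span_le]
      rintro z rfl
      exact ⟨hxV₁, subset_span rfl⟩
    have hU : span F ({wx a} : Set (Fin 3 → K)) =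
        V₁ ⊓ (span K ({wx a} : Set (Fin 3 → K))).restrictScalars F := by
      apply Submodule.eq_of_le_of_finrank_le hsle
      rw [finrank_span_singleton hx0]
      omega
    apply le_antisymm
    · intro w hw
      have hwW₁ : w ∈ W₁ := hV₁W₁ hw.1
      have hwW₂ : w ∈ W₂ := hV₂'W₂ hw.2
      have hwspan : w ∈ span K ({wx a} : Set (Fin 3 → K)) := by
        rw [← hWinf]
        exact ⟨hwW₁, hwW₂⟩
      rw [hU]
      exact ⟨hw.1, hwspan⟩
    · rw [span_le]
      rintro z rfl
      exact ⟨hxV₁, hxV₂'⟩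
  set V : Submodule F (Fin 3 → K) := V₁ ⊔ V₂' with hVdef
  have hVrank : finrank F V = 3 := by
    have h5 := Submodule.finrank_sup_add_finrank_inf_eq V₁ V₂'
    rw [hVinf, finrank_span_singleton hx0, hV₁rank, hV₂'rank] at h5
    rw [hVdef]
    omega
  have hVtop : span K (V : Set (Fin 3 → K)) = ⊤ := by
    rw [eq_top_iff, ← hWsup]
    apply sup_le
    · rw [hW₁def, span_le]
      intro z hz
      exact subset_span (le_sup_left (α := Submodule F (Fin 3 → K)) (subset_span hz))
    · rw [hW₂def, span_le]
      rintro z hz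
      have h1 : κ⁻¹ • z ∈ V₂' := by
        rcases hz with rfl | rfl
        · exact subset_span (Set.mem_insert _ _)
        · exact subset_span (Set.mem_insert_of_mem _ rfl)
      have h2 : κ⁻¹ • z ∈ span K (V : Set (Fin 3 → K)) :=
        subset_span (le_sup_right (α := Submodule F (Fin 3 → K)) h1)
      have h3 := Submodule.smul_mem _ κ h2
      rwa [smul_smul, mul_inv_cancel₀ hκ0, one_smul] at h3
  set B : Set (Projectivization K (Fin 3 → K)) :=
    {p | ∃ w ∈ V, w ≠ 0 ∧ p.submodule = span K {w}} with hBdef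
  have hplane : IsBaerSubplane F B := stmt17_form_subplane V hVrank hVtop
  have hsub : B₁ ∪ B₂ ⊆ B := by
    rintro p (hp | hp)
    · rw [hB₁] at hp
      obtain ⟨v, hv, hpv⟩ := hp
      exact ⟨wx v, le_sup_left (α := Submodule F (Fin 3 → K)) (hwxV₁ v), hwx_ne hv, hpv⟩
    · rw [hB₂] at hp
      obtain ⟨v, hv, hpv⟩ := hp
      refine ⟨κ⁻¹ • wy v, le_sup_right (α := Submodule F (Fin 3 → K)) (hwyV₂' v),
        smul_ne_zero (inv_ne_zero hκ0) (hwy_ne hv), ?_⟩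
      rw [hpv, Submodule.span_singleton_smul_eq (IsUnit.mk0 _ (inv_ne_zero hκ0)) _]
  refine ⟨B, ⟨hplane, hsub⟩, ?_⟩
  -- uniqueness
  rintro B' ⟨hB'p, hB'sub⟩
  obtain ⟨V'', hV''3, hV''top, hB'⟩ := stmt17_subplane_form hB'p
  have hmkB₁ : ∀ (v : Fin 2 → F) (hv : v ≠ 0),
      Projectivization.mk K (wx v) (hwx_ne hv) ∈ B₁ := by
    intro v hv
    rw [hB₁]
    exact ⟨v, hv, by rw [Projectivization.submodule_mk]⟩
  have hmkB₂ : ∀ (v : Fin 2 → F) (hv : v ≠ 0),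
      Projectivization.mk K (wy v) (hwy_ne hv) ∈ B₂ := by
    intro v hv
    rw [hB₂]
    exact ⟨v, hv, by rw [Projectivization.submodule_mk]⟩
  have hscalx : ∀ (v : Fin 2 → F), v ≠ 0 → ∃ l : K, l ≠ 0 ∧ l • wx v ∈ V'' := by
    intro v hv
    have hpB' : Projectivization.mk K (wx v) (hwx_ne hv) ∈ B' :=
      hB'sub (Set.mem_union_left _ (hmkB₁ v hv))
    rw [hB'] at hpB'
    obtain ⟨w, hwV'', hw0, hpw⟩ := hpB'
    rw [Projectivization.submodule_mk] at hpw
    have hwmem : w ∈ span K ({wx v} : Set (Fin 3 → K)) := by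
      rw [hpw]
      exact mem_span_singleton_self _
    obtain ⟨l, hl⟩ := mem_span_singleton.mp hwmem
    refine ⟨l, ?_, by rw [hl]; exact hwV''⟩
    rintro rfl
    apply hw0
    rw [← hl, zero_smul]
  have hscaly : ∀ (v : Fin 2 → F), v ≠ 0 → ∃ l : K, l ≠ 0 ∧ l • wy v ∈ V'' := by
    intro v hv
    have hpB' : Projectivization.mk K (wy v) (hwy_ne hv) ∈ B' :=
      hB'sub (Set.mem_union_right _ (hmkB₂ v hv))
    rw [hB'] at hpB'
    obtain ⟨w, hwV'', hw0, hpw⟩ := hpB'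
    rw [Projectivization.submodule_mk] at hpw
    have hwmem : w ∈ span K ({wy v} : Set (Fin 3 → K)) := by
      rw [hpw]
      exact mem_span_singleton_self _
    obtain ⟨l, hl⟩ := mem_span_singleton.mp hwmem
    refine ⟨l, ?_, by rw [hl]; exact hwV''⟩
    rintro rfl
    apply hw0
    rw [← hl, zero_smul]
  -- special values
  have hne10 : (![1, 0] : Fin 2 → F) ≠ 0 := by
    intro h; simpa using congrFun h 0
  have hne01 : (![0, 1] : Fin 2 → F) ≠ 0 := by
    intro h; simpa using congrFun h 1
  have hne11 : (![1, 1] : Fin 2 → F) ≠ 0 := by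
    intro h; simpa using congrFun h 0
  have hwx10 : wx ![1, 0] = x₁ := by rw [hwx]; simp
  have hwx01 : wx ![0, 1] = x₂ := by rw [hwx]; simp
  have hwx11 : wx ![1, 1] = x₁ + x₂ := by rw [hwx]; simp
  have hwy10 : wy ![1, 0] = y₁ := by rw [hwy]; simp
  have hwy01 : wy ![0, 1] = y₂ := by rw [hwy]; simp
  have hwy11 : wy ![1, 1] = y₁ + y₂ := by rw [hwy]; simp
  obtain ⟨l₁, hl₁, hl₁m⟩ := hscalx ![1, 0] hne10
  obtain ⟨l₂, hl₂, hl₂m⟩ := hscalx ![0, 1] hne01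
  obtain ⟨l₃, hl₃, hl₃m⟩ := hscalx ![1, 1] hne11
  rw [hwx10] at hl₁m
  rw [hwx01] at hl₂m
  rw [hwx11] at hl₃m
  obtain ⟨μ₁, hμ₁0, hμ₁x₁, hμ₁x₂⟩ :=
    stmt17_lemC V'' hV''3 hV''top hxi hl₁ hl₂ hl₃ hl₁m hl₂m hl₃m
  obtain ⟨m₁, hm₁, hm₁m⟩ := hscaly ![1, 0] hne10
  obtain ⟨m₂, hm₂, hm₂m⟩ := hscaly ![0, 1] hne01
  obtain ⟨m₃, hm₃, hm₃m⟩ := hscaly ![1, 1] hne11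
  rw [hwy10] at hm₁m
  rw [hwy01] at hm₂m
  rw [hwy11] at hm₃m
  obtain ⟨μ₂, hμ₂0, hμ₂y₁, hμ₂y₂⟩ :=
    stmt17_lemC V'' hV''3 hV''top hyi hm₁ hm₂ hm₃ hm₁m hm₂m hm₃m
  -- μ₁ • wx v ∈ V'' for all v, similarly μ₂ • wy v
  have hμwx : ∀ v : Fin 2 → F, μ₁ • wx v ∈ V'' := by
    intro v
    rw [hwx]
    show μ₁ • (algebraMap F K (v 0) • x₁ + algebraMap F K (v 1) • x₂) ∈ V''
    rw [smul_add, smul_comm μ₁ (algebraMap F K (v 0)) x₁,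
      smul_comm μ₁ (algebraMap F K (v 1)) x₂, algebraMap_smul, algebraMap_smul]
    exact V''.add_mem (V''.smul_mem _ hμ₁x₁) (V''.smul_mem _ hμ₁x₂)
  have hμwy : ∀ v : Fin 2 → F, μ₂ • wy v ∈ V'' := by
    intro v
    rw [hwy]
    show μ₂ • (algebraMap F K (v 0) • y₁ + algebraMap F K (v 1) • y₂) ∈ V''
    rw [smul_add, smul_comm μ₂ (algebraMap F K (v 0)) y₁,
      smul_comm μ₂ (algebraMap F K (v 1)) y₂, algebraMap_smul, algebraMap_smul]
    exact V''.add_mem (V''.smul_mem _ hμ₂y₁) (V''.smul_mem _ hμ₂y₂)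
  -- align the scalars using the common point
  have hμ₁x : μ₁ • wx a ∈ V'' := hμwx a
  have hμ₂κx : (μ₂ * κ) • wx a ∈ V'' := by
    rw [mul_smul, hκ]
    exact hμwy bb
  obtain ⟨c, hc0, hcc⟩ := stmt17_lemD V'' hV''3 hV''top hx0 hμ₁0
    (mul_ne_zero hμ₂0 hκ0) hμ₁x hμ₂κx
  -- hcc : μ₂ * κ = algebraMap F K c * μ₁
  have hμV : ∀ w ∈ V, μ₁ • w ∈ V'' := by
    intro w hw
    rw [hVdef, Submodule.mem_sup] at hw
    obtain ⟨u, hu, u', hu', rfl⟩ := hw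
    rw [smul_add]
    apply V''.add_mem
    · obtain ⟨s, t, hst⟩ := mem_span_pair.mp hu
      rw [← hst, smul_add, ← smul_comm s μ₁ x₁, ← smul_comm t μ₁ x₂]
      exact V''.add_mem (V''.smul_mem _ hμ₁x₁) (V''.smul_mem _ hμ₁x₂)
    · obtain ⟨s, t, hst⟩ := mem_span_pair.mp hu'
      have hkey : ∀ z : Fin 3 → K, μ₁ • (κ⁻¹ • z) = (c⁻¹ : F) • (μ₂ • z) := by
        intro z
        rw [← algebraMap_smul K (c⁻¹ : F) (μ₂ • z), map_inv₀, smul_smul, smul_smul]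
        congr 1
        have hcK : algebraMap F K c ≠ 0 := by simpa using hc0
        field_simp
        linear_combination -hcc
      rw [← hst, smul_add, ← smul_comm s μ₁ (κ⁻¹ • y₁), ← smul_comm t μ₁ (κ⁻¹ • y₂),
        hkey y₁, hkey y₂]
      exact V''.add_mem (V''.smul_mem _ (V''.smul_mem _ hμ₂y₁))
        (V''.smul_mem _ (V''.smul_mem _ hμ₂y₂))
  -- the scaling equivalence
  set e : (Fin 3 → K) ≃ₗ[F] (Fin 3 → K) :=
    { toFun := fun w => μ₁ • w
      invFun := fun w => μ₁⁻¹ • w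
      map_add' := fun u v => smul_add μ₁ u v
      map_smul' := fun c w => (smul_comm c μ₁ w).symm
      left_inv := fun w => by
        show μ₁⁻¹ • (μ₁ • w) = w
        rw [smul_smul, inv_mul_cancel₀ hμ₁0, one_smul]
      right_inv := fun w => by
        show μ₁ • (μ₁⁻¹ • w) = w
        rw [smul_smul, mul_inv_cancel₀ hμ₁0, one_smul] } with hedef
  have hmap : Submodule.map (e : (Fin 3 → K) →ₗ[F] (Fin 3 → K)) V = V'' := by
    apply Submodule.eq_of_le_of_finrank_le
    · rintro w ⟨u, hu, rfl⟩
      exact hμV u hu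
    · rw [hV''3, LinearEquiv.finrank_map_eq e V, hVrank]
  rw [hB', hBdef]
  ext p
  simp only [Set.mem_setOf_eq]
  constructor
  · rintro ⟨w, hwV'', hw0, hpw⟩
    rw [← hmap] at hwV''
    obtain ⟨u, hu, rfl⟩ := hwV''
    have hu0 : u ≠ 0 := by
      rintro rfl
      apply hw0
      show μ₁ • (0 : Fin 3 → K) = 0
      rw [smul_zero]
    refine ⟨u, hu, hu0, ?_⟩
    rw [hpw]
    exact Submodule.span_singleton_smul_eq (IsUnit.mk0 _ hμ₁0) u
  · rintro ⟨u, hu, hu0, hpu⟩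
    refine ⟨μ₁ • u, hmap ▸ ⟨u, hu, rfl⟩, smul_ne_zero hμ₁0 hu0, ?_⟩
    rw [hpu]
    exact (Submodule.span_singleton_smul_eq (IsUnit.mk0 _ hμ₁0) u).symm
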